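/- Let H be an additive subgroup of F_q (equivalently, an F_p-submodule of F_q, so that (1,0,H) ∈ S). Then the subgroups K of AGL(1,F_q) with S(1,0,H) ≤ K are precisely the subgroups of the form S(γ^((q-1)/d1), b1, H1), where d1 | q-1, H ⊆ H1, and (γ^((q-1)/d1), b1, H1) ∈ S. -/

import Mathlib

open Matrix
open scoped Classical

abbrev GL2 (F : Type) [Field F] := GL (Fin 2) F

/-- `AGL(1,F)`: the subgroup of `GL(2,F)` of matrices of the form `[[a,b],[0,1]]`. -/
def AGL (F : Type) [Field F] : Subgroup (GL2 F) where
  carrier := {g | (g : Matrix (Fin 2) (Fin 2) F) 1 0 = 0 ∧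
                  (g : Matrix (Fin 2) (Fin 2) F) 1 1 = 1}
  one_mem' := by
    constructor <;> simp [Matrix.one_apply]
  mul_mem' := by
    rintro a b ⟨ha0, ha1⟩ ⟨hb0, hb1⟩
    constructor <;>
      simp [Units.val_mul, Matrix.mul_apply, Fin.sum_univ_two, ha0, ha1, hb0, hb1]
  inv_mem' := by
    rintro g ⟨h0, h1⟩
    have hdet : ((g : Matrix (Fin 2) (Fin 2) F) 0 0) ≠ 0 := by
      have hu : IsUnit ((g : Matrix (Fin 2) (Fin 2) F).det) :=
        (Matrix.isUnit_iff_isUnit_det _).1 g.isUnit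
      rw [Matrix.det_fin_two, h0, h1] at hu
      simpa using hu.ne_zero
    have hinv : ((g⁻¹ : GL2 F) : Matrix (Fin 2) (Fin 2) F)
        = ((g : Matrix (Fin 2) (Fin 2) F))⁻¹ := Matrix.coe_units_inv g
    constructor <;>
      simp [hinv, Matrix.inv_def, Matrix.adjugate_fin_two, Matrix.det_fin_two,
        h0, h1, hdet]

/-- Membership of a triple `(a,b,H)` in the set `𝒮`: `a ∈ F*`, `H` is an additive
subgroup of `F` closed under multiplication by the subfield `F_p(a)` generated by `a`,
and `b = 0` when `a = 1`. -/
def memS {F : Type} [Field F] (a b : F) (H : AddSubgroup F) : Prop :=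
  a ≠ 0 ∧ (a = 1 → b = 0) ∧ ∀ x ∈ Subfield.closure {a}, ∀ h ∈ H, x * h ∈ H

/-- `S(a,b,H)`: the subgroup of `GL(2,F)` generated by the matrix `[[a,b],[0,1]]`
together with the matrices `[[1,h],[0,1]]`, `h ∈ H`. -/
def Sgrp {F : Type} [Field F] (a b : F) (H : AddSubgroup F) : Subgroup (GL2 F) :=
  Subgroup.closure {g : GL2 F |
    (g : Matrix (Fin 2) (Fin 2) F) = !![a, b; 0, 1] ∨
    ∃ h ∈ H, (g : Matrix (Fin 2) (Fin 2) F) = !![1, h; 0, 1]}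

/-- `pPow p d` is `p(d)`: the smallest (positive) power of `p` that is `≡ 1 (mod d)`. -/
noncomputable def pPow (p d : ℕ) : ℕ := sInf {m | (∃ k : ℕ, 1 ≤ k ∧ m = p ^ k) ∧ m % d = 1 % d}

section Aux

variable {F : Type} [Field F]

/-- the element `[[u, b],[0,1]]` of `GL2 F`. -/
lemma isUnit_mkA (u : Fˣ) (b : F) : IsUnit !![(u : F), b; 0, 1] :=
  (Matrix.isUnit_iff_isUnit_det _).2 (by
    rw [Matrix.det_fin_two_of]; simpa using u.isUnit)

noncomputable def mkA (u : Fˣ) (b : F) : GL2 F := (isUnit_mkA u b).unit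

@[simp] lemma coe_mkA (u : Fˣ) (b : F) :
    ((mkA u b : GL2 F) : Matrix (Fin 2) (Fin 2) F) = !![(u : F), b; 0, 1] :=
  (isUnit_mkA u b).unit_spec

lemma mkA_mul (u v : Fˣ) (b d : F) :
    mkA u b * mkA v d = mkA (u * v) ((u : F) * d + b) := by
  ext : 1
  show ((mkA u b : GL2 F) : Matrix (Fin 2) (Fin 2) F) * ((mkA v d : GL2 F) : _) = _
  rw [coe_mkA, coe_mkA, coe_mkA, Matrix.mul_fin_two]
  congr 1 <;> push_cast <;> ring

lemma mkA_one : (mkA 1 0 : GL2 F) = 1 := by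
  ext : 1
  simp [Matrix.one_fin_two]

lemma mkA_inv (u : Fˣ) (b : F) :
    (mkA u b)⁻¹ = mkA u⁻¹ (-((u⁻¹ : Fˣ) * b : F)) := by
  refine inv_eq_of_mul_eq_one_right ?_
  rw [mkA_mul, mul_inv_cancel]
  have : (↑u * -(↑u⁻¹ * b) + b : F) = 0 := by field_simp; rw [Units.mul_inv]; ring
  rw [this, mkA_one]

lemma mkA_pow (u : Fˣ) (b : F) (k : ℕ) :
    ∃ c : F, (mkA u b) ^ k = mkA (u ^ k) c := by
  induction k with
  | zero => exact ⟨0, by simp [mkA_one]⟩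
  | succ n ih =>
    obtain ⟨c, hc⟩ := ih
    exact ⟨(u : F) ^ n * b + c, by rw [pow_succ, hc, mkA_mul, ← pow_succ]; norm_cast⟩

lemma eq_mkA_of_mem_AGL (g : GL2 F) (hg : g ∈ AGL F) :
    ∃ u : Fˣ, (u : F) = (g : Matrix (Fin 2) (Fin 2) F) 0 0 ∧
      g = mkA u ((g : Matrix (Fin 2) (Fin 2) F) 0 1) := by
  obtain ⟨h0, h1⟩ := hg
  have hdet : IsUnit ((g : Matrix (Fin 2) (Fin 2) F) 0 0) := by
    have hu : IsUnit ((g : Matrix (Fin 2) (Fin 2) F).det) :=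
      (Matrix.isUnit_iff_isUnit_det _).1 g.isUnit
    rwa [Matrix.det_fin_two, h0, h1, mul_one, mul_zero, sub_zero] at hu
  refine ⟨hdet.unit, hdet.unit_spec, ?_⟩
  ext : 1
  rw [coe_mkA, hdet.unit_spec]
  ext i j
  fin_cases i <;> fin_cases j <;> simp [h0, h1]

lemma mkA_mem_Sgrp (u : Fˣ) (b : F) (hu : (u : F) ≠ 0 → True) {a : F} {H : AddSubgroup F}
    (h : (u : F) = a) : mkA u b ∈ Sgrp a b H :=
  Subgroup.subset_closure (Or.inl (by rw [coe_mkA, h]))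

lemma trans_mem_Sgrp {a b : F} {H : AddSubgroup F} {h : F} (hh : h ∈ H) :
    mkA 1 h ∈ Sgrp a b H :=
  Subgroup.subset_closure (Or.inr ⟨h, hh, by simp⟩)

end Aux

/-- For an additive subgroup `H` of `F_q` (so `(1,0,H) ∈ 𝒮`), the subgroups of
`AGL(1,F_q)` containing `S(1,0,H)` are precisely the `S(γ^((q-1)/d₁),b₁,H₁)` with
`d₁ ∣ q-1`, `H ⊆ H₁`, and `(γ^((q-1)/d₁),b₁,H₁) ∈ 𝒮`. -/
theorem stmt10 (F : Type) [Field F] [Fintype F] (q : ℕ) (hq : Fintype.card F = q)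
    (γ : F) (hγ0 : γ ≠ 0) (hγ : ∀ x : F, x ≠ 0 → ∃ k : ℕ, x = γ ^ k)
    (H : AddSubgroup F) (K : Subgroup (GL2 F)) :
    (Sgrp (1 : F) 0 H ≤ K ∧ K ≤ AGL F) ↔
      ∃ (d1 : ℕ) (b1 : F) (H1 : AddSubgroup F), d1 ∣ q - 1 ∧ H ≤ H1 ∧
        memS (γ ^ ((q - 1) / d1)) b1 H1 ∧ K = Sgrp (γ ^ ((q - 1) / d1)) b1 H1 := by
  constructor
  · rintro ⟨hSK, hKA⟩
    have hq2 : 2 ≤ q := hq ▸ Fintype.one_lt_card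
    have hq1 : q - 1 ≠ 0 := by omega
    set γu : Fˣ := Units.mk0 γ hγ0 with hγudef
    have hγuc : (γu : F) = γ := rfl
    have hgen : ∀ u : Fˣ, ∃ k : ℕ, u = γu ^ k := by
      intro u
      obtain ⟨k, hk⟩ := hγ u u.ne_zero
      exact ⟨k, Units.ext (by push_cast [hγuc]; exact hk)⟩
    have hcardU : Fintype.card Fˣ = q - 1 := by rw [Fintype.card_units, hq]
    have hγq : γu ^ (q - 1) = 1 := by rw [← hcardU]; exact pow_card_eq_one
    -- the image subgroup
    let A : Subgroup Fˣ :=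
      { carrier := {u | ∃ b, mkA u b ∈ K}
        one_mem' := ⟨0, by rw [mkA_one]; exact one_mem K⟩
        mul_mem' := by
          rintro u v ⟨b, hb⟩ ⟨d, hd⟩
          exact ⟨(u : F) * d + b, by rw [← mkA_mul]; exact mul_mem hb hd⟩
        inv_mem' := by
          rintro u ⟨b, hb⟩
          exact ⟨-((u⁻¹ : Fˣ) * b : F), by rw [← mkA_inv]; exact inv_mem hb⟩ }
    have hmemA : ∀ u : Fˣ, u ∈ A ↔ ∃ b, mkA u b ∈ K := fun u => Iff.rfl
    have hq1A : γu ^ (q - 1) ∈ A := by rw [hγq]; exact one_mem A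
    have hEne : (q - 1) ∈ {k : ℕ | 0 < k ∧ γu ^ k ∈ A} := ⟨by omega, hq1A⟩
    set m : ℕ := sInf {k : ℕ | 0 < k ∧ γu ^ k ∈ A} with hmdef
    have hmE : 0 < m ∧ γu ^ m ∈ A := Nat.sInf_mem ⟨_, hEne⟩
    have hdvd : ∀ k : ℕ, γu ^ k ∈ A → m ∣ k := by
      intro k hk
      rcases Nat.eq_zero_or_pos (k % m) with h0 | hpos
      · exact Nat.dvd_of_mod_eq_zero h0
      · exfalso
        have hsplit : (γu ^ m) ^ (k / m) * γu ^ (k % m) = γu ^ k := by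
          rw [← pow_mul, ← pow_add, Nat.div_add_mod]
        have hmem : γu ^ (k % m) ∈ A := by
          have : γu ^ (k % m) = ((γu ^ m) ^ (k / m))⁻¹ * γu ^ k := by
            rw [← hsplit]; group
          rw [this]
          exact mul_mem (inv_mem (pow_mem hmE.2 _)) hk
        have h1 : m ≤ k % m := by
          rw [hmdef]; exact Nat.sInf_le ⟨hpos, hmem⟩
        have h2 := Nat.mod_lt k hmE.1
        omega
    have hmq : m ∣ q - 1 := hdvd _ hq1A
    have hm' : (q - 1) / ((q - 1) / m) = m := Nat.div_div_self hmq hq1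
    refine ⟨(q - 1) / m, ?_⟩
    rw [hm']
    have hac : ((γu ^ m : Fˣ) : F) = γ ^ m := by push_cast [hγuc]; ring
    have ha0 : (γ : F) ^ m ≠ 0 := pow_ne_zero _ hγ0
    obtain ⟨b0, hb0⟩ := hmE.2
    set b1 : F := if γ ^ m = 1 then 0 else b0 with hb1def
    have hb1 : mkA (γu ^ m) b1 ∈ K := by
      by_cases h1 : γ ^ m = 1
      · have hu1 : γu ^ m = 1 := Units.ext (by rw [hac]; exact h1)
        rw [hb1def, if_pos h1, hu1, mkA_one]
        exact one_mem K
      · rw [hb1def, if_neg h1]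
        exact hb0
    let H1 : AddSubgroup F :=
      { carrier := {h | mkA 1 h ∈ K}
        zero_mem' := by show mkA 1 (0 : F) ∈ K; rw [mkA_one]; exact one_mem K
        add_mem' := by
          intro x y hx hy
          show mkA 1 (x + y) ∈ K
          have := mul_mem (show mkA 1 x ∈ K from hx) (show mkA 1 y ∈ K from hy)
          rw [mkA_mul] at this
          simpa [add_comm] using this
        neg_mem' := by
          intro x hx
          show mkA 1 (-x) ∈ K
          have := inv_mem (show mkA 1 x ∈ K from hx)
          rw [mkA_inv] at this
          simpa using this }
    have hmemH1 : ∀ x : F, x ∈ H1 ↔ mkA 1 x ∈ K := fun x => Iff.rfl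
    have hHH1 : H ≤ H1 := by
      intro h hh
      exact (hmemH1 h).2 (hSK (trans_mem_Sgrp hh))
    -- conjugation: multiplication by γ^m preserves H1
    have haR : ∀ h : F, h ∈ H1 → γ ^ m * h ∈ H1 := by
      intro h hh
      rw [hmemH1] at hh ⊢
      have key : mkA (γu ^ m) b1 * mkA 1 h * (mkA (γu ^ m) b1)⁻¹
          = mkA 1 (γ ^ m * h) := by
        rw [mkA_inv, mkA_mul, mkA_mul]
        congr 1
        · group
        · rw [hac]
          push_cast [hγuc]
          field_simp
          ring
      rw [← key]
      exact mul_mem (mul_mem hb1 hh) (inv_mem hb1)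
    -- closure under the subfield generated by γ^m
    have hclos : ∀ x ∈ Subfield.closure {γ ^ m}, ∀ h ∈ H1, x * h ∈ H1 := by
      intro x hx
      induction hx using Subfield.closure_induction with
      | mem y hy =>
        intro h hh
        rcases hy with rfl
        exact haR h hh
      | one => intro h hh; simpa using hh
      | add y z hy hz ihy ihz =>
        intro h hh
        have := H1.add_mem (ihy h hh) (ihz h hh)
        simpa [add_mul] using this
      | neg y hy ihy =>
        intro h hh
        have := H1.neg_mem (ihy h hh)
        simpa using this
      | inv y hy ihy =>
        intro h hh
        by_cases hy0 : y = 0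
        · simpa [hy0] using H1.zero_mem
        · have hpow : ∀ n : ℕ, ∀ h ∈ H1, y ^ n * h ∈ H1 := by
            intro n
            induction n with
            | zero => intro h hh; simpa using hh
            | succ k ih =>
              intro h hh
              have := ihy _ (ih h hh)
              rw [← mul_assoc] at this
              rw [pow_succ, mul_comm (y ^ k) y]
              exact this
          have hyinv : y⁻¹ = y ^ (q - 2) := by
            have h1 : y ^ (q - 2) * y = 1 := by
              rw [← pow_succ, show q - 2 + 1 = q - 1 by omega, ← hq]
              exact FiniteField.pow_card_sub_one_eq_one y hy0
            exact inv_eq_of_mul_eq_one_left h1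
          rw [hyinv]
          exact hpow (q - 2) h hh
      | mul y z hy hz ihy ihz =>
        intro h hh
        rw [mul_assoc]
        exact ihy _ (ihz h hh)
    refine ⟨b1, H1, Nat.div_dvd_of_dvd hmq, hHH1,
      ⟨ha0, fun h1 => by rw [hb1def, if_pos h1], hclos⟩, ?_⟩
    -- K = Sgrp (γ ^ m) b1 H1
    apply le_antisymm
    · intro g hg
      obtain ⟨u, hu00, hgeq⟩ := eq_mkA_of_mem_AGL g (hKA hg)
      set y : F := (g : Matrix (Fin 2) (Fin 2) F) 0 1 with hydef
      have huA : u ∈ A := ⟨y, by rw [← hgeq]; exact hg⟩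
      obtain ⟨k, hk⟩ := hgen u
      obtain ⟨j, hj⟩ := hdvd k (by rw [← hk]; exact huA)
      have hupow : u = (γu ^ m) ^ j := by rw [hk, hj, pow_mul]
      obtain ⟨c, hc⟩ := mkA_pow (γu ^ m) b1 j
      have hPK : (mkA (γu ^ m) b1) ^ j ∈ K := pow_mem hb1 j
      have htr : mkA 1 (y - c) ∈ K := by
        have hmul : g * ((mkA (γu ^ m) b1) ^ j)⁻¹ = mkA 1 (y - c) := by
          rw [hc, ← hupow, hgeq, mkA_inv, mkA_mul]
          congr 1
          · group
          · field_simp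
            rw [Units.mul_inv]
            ring
        rw [← hmul]
        exact mul_mem hg (inv_mem hPK)
      have hgdec : g = mkA 1 (y - c) * (mkA (γu ^ m) b1) ^ j := by
        rw [hc, ← hupow, hgeq, mkA_mul]
        congr 1
        · group
        · simp
      rw [hgdec]
      refine mul_mem (trans_mem_Sgrp htr) (pow_mem ?_ j)
      exact mkA_mem_Sgrp _ _ (fun _ => trivial) hac
    · rw [Sgrp]
      rw [Subgroup.closure_le]
      rintro g (hg | ⟨h, hh, hg⟩)
      · have : g = mkA (γu ^ m) b1 := Units.ext (by rw [hg, coe_mkA, hac])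
        rw [this]; exact hb1
      · have : g = mkA 1 h := Units.ext (by rw [hg, coe_mkA, Units.val_one])
        rw [this]; exact hh
  · rintro ⟨d1, b1, H1, hd1, hHH1, ⟨ha0, hab, hcl⟩, rfl⟩
    set a : F := γ ^ ((q - 1) / d1) with hadef
    constructor
    · rw [Sgrp, Subgroup.closure_le]
      rintro g (hg | ⟨h, hh, hg⟩)
      · have : g = 1 := Units.ext (by rw [hg, Units.val_one, Matrix.one_fin_two])
        rw [this]; exact one_mem _
      · exact Subgroup.subset_closure (Or.inr ⟨h, hHH1 hh, hg⟩)
    · rw [Sgrp, Subgroup.closure_le]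
      rintro g (hg | ⟨h, hh, hg⟩) <;>
        exact ⟨by rw [hg]; simp, by rw [hg]; simp⟩
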